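/- arXiv:2402.10571 — 2 statements merged into one kernel-verified Lean document; each statement's English description precedes it below -/
import Mathlib

section
/- Let X ~ Gumbel(a, 1) and Y ~ Gumbel(b, 1) be independent. Then for any real δ, P(X - Y > δ) = σ((a - b) - δ), where σ is the logistic sigmoid. -/
open MeasureTheory ProbabilityTheory Real Filter Topology
open Set (Iic Iio Ioi Ici)

noncomputable def sigma (x : ℝ) : ℝ := 1 / (1 + Real.exp (-x))

noncomputable def gpdf (r c x : ℝ) : ℝ :=
  r * Real.exp (-(x - c)) * Real.exp (-(r * Real.exp (-(x - c))))

noncomputable def gcdf (r c x : ℝ) : ℝ := Real.exp (-(r * Real.exp (-(x - c))))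

lemma gcdf_hasDerivAt (r c x : ℝ) : HasDerivAt (gcdf r c) (gpdf r c x) x := by
  have h1 : HasDerivAt (fun x : ℝ => -(x - c)) (-1) x := ((hasDerivAt_id x).sub_const c).neg
  have h2 := h1.exp
  have h3 := (h2.const_mul r).neg
  have h4 := h3.exp
  convert h4 using 1
  · rfl
  unfold gpdf
  simp only [Pi.neg_apply]
  ring

lemma gpdf_nonneg {r : ℝ} (hr : 0 ≤ r) (c x : ℝ) : 0 ≤ gpdf r c x := by
  unfold gpdf; positivity

lemma gpdf_measurable (r c : ℝ) : Measurable (gpdf r c) := by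
  unfold gpdf; fun_prop

lemma gcdf_tendsto_atTop (r c : ℝ) : Tendsto (gcdf r c) atTop (𝓝 1) := by
  have h1 : Tendsto (fun x : ℝ => -(x - c)) atTop atBot := by
    have h0 : Tendsto (fun x : ℝ => x + -c) atTop atTop :=
      tendsto_atTop_add_const_right atTop (-c) tendsto_id
    simpa [sub_eq_add_neg] using tendsto_neg_atBot_iff.2 h0
  have h2 : Tendsto (fun x : ℝ => Real.exp (-(x - c))) atTop (𝓝 0) :=
    Real.tendsto_exp_atBot.comp h1
  have h3 : Tendsto (fun x : ℝ => -(r * Real.exp (-(x - c)))) atTop (𝓝 0) := by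
    have := (h2.const_mul r).neg
    simpa using this
  have h4 : Tendsto (fun y : ℝ => Real.exp y) (𝓝 0) (𝓝 1) := by
    have := Real.continuous_exp.continuousAt (x := (0:ℝ))
    rw [ContinuousAt, Real.exp_zero] at this
    exact this
  exact h4.comp h3

lemma gcdf_tendsto_atBot {r : ℝ} (hr : 0 < r) (c : ℝ) :
    Tendsto (gcdf r c) atBot (𝓝 0) := by
  have h1 : Tendsto (fun x : ℝ => -(x - c)) atBot atTop := by
    have h0 : Tendsto (fun x : ℝ => x + -c) atBot atBot :=
      tendsto_atBot_add_const_right atBot (-c) tendsto_id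
    simpa [sub_eq_add_neg] using tendsto_neg_atTop_iff.2 h0
  have h2 : Tendsto (fun x : ℝ => Real.exp (-(x - c))) atBot atTop :=
    Real.tendsto_exp_atTop.comp h1
  have h3 : Tendsto (fun x : ℝ => -(r * Real.exp (-(x - c)))) atBot atBot :=
    tendsto_neg_atBot_iff.2 (h2.const_mul_atTop hr)
  exact Real.tendsto_exp_atBot.comp h3

lemma gpdf_integrable {r : ℝ} (hr : 0 < r) (c : ℝ) : Integrable (gpdf r c) := by
  have hIoi : IntegrableOn (gpdf r c) (Ioi 0) := by
    refine integrableOn_Ioi_deriv_of_nonneg' (g := gcdf r c)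
      (fun x _ => gcdf_hasDerivAt r c x) (fun x _ => gpdf_nonneg hr.le c x)
      (gcdf_tendsto_atTop r c)
  have hIio : IntegrableOn (gpdf r c) (Iio 0) := by
    have hd : ∀ x ∈ Ici (0:ℝ), HasDerivAt (fun x => -gcdf r c (-x)) (gpdf r c (-x)) x := by
      intro x _
      have h1 : HasDerivAt (fun x : ℝ => gcdf r c (-x)) (gpdf r c (-x) * (-1)) x :=
        (gcdf_hasDerivAt r c (-x)).comp x (hasDerivAt_neg x)
      have := h1.neg
      simpa [Pi.neg_def] using this
    have htop : Tendsto (fun x : ℝ => -gcdf r c (-x)) atTop (𝓝 0) := by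
      have := ((gcdf_tendsto_atBot hr c).comp tendsto_neg_atTop_atBot).neg
      simpa [Function.comp] using this
    have hneg : IntegrableOn (fun x => gpdf r c (-x)) (Ioi 0) :=
      integrableOn_Ioi_deriv_of_nonneg' hd (fun x _ => gpdf_nonneg hr.le c (-x)) htop
    have := (MeasurePreserving.integrableOn_comp_preimage
      (Measure.measurePreserving_neg (volume : Measure ℝ))
      (Homeomorph.neg ℝ).measurableEmbedding (f := gpdf r c) (s := Iio 0)).1
    apply this
    have hset : (Neg.neg ⁻¹' Iio (0:ℝ)) = Ioi 0 := by ext x; simp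
    rw [hset]
    exact hneg
  rw [← integrableOn_univ, ← Set.Iio_union_Ici (a := (0:ℝ))]
  exact hIio.union ((integrableOn_Ici_iff_integrableOn_Ioi).2 hIoi)

lemma gpdf_integral_Iic {r : ℝ} (hr : 0 < r) (c t : ℝ) :
    ∫ x in Iic t, gpdf r c x = gcdf r c t := by
  have := integral_Iic_of_hasDerivAt_of_tendsto' (a := t)
    (fun x _ => gcdf_hasDerivAt r c x) ((gpdf_integrable hr c).integrableOn)
    (gcdf_tendsto_atBot hr c)
  simpa using this

lemma gpdf_integral {r : ℝ} (hr : 0 < r) (c : ℝ) : ∫ x, gpdf r c x = 1 := by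
  have := integral_of_hasDerivAt_of_tendsto (fun x => gcdf_hasDerivAt r c x)
    (gpdf_integrable hr c) (gcdf_tendsto_atBot hr c) (gcdf_tendsto_atTop r c)
  simpa using this

noncomputable def gmeas (c : ℝ) : Measure ℝ :=
  volume.withDensity (fun x => ENNReal.ofReal (gpdf 1 c x))

lemma gmeas_apply (c : ℝ) {s : Set ℝ} (hs : MeasurableSet s) :
    gmeas c s = ENNReal.ofReal (∫ x in s, gpdf 1 c x) := by
  rw [gmeas, withDensity_apply _ hs,
    ← ofReal_integral_eq_lintegral_ofReal ((gpdf_integrable one_pos c).integrableOn)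
      (Filter.Eventually.of_forall fun x => gpdf_nonneg one_pos.le c x)]

lemma gmeas_Iic (c t : ℝ) :
    gmeas c (Iic t) = ENNReal.ofReal (Real.exp (-Real.exp (-(t - c)))) := by
  rw [gmeas_apply c measurableSet_Iic, gpdf_integral_Iic one_pos]
  simp [gcdf]

instance gmeas_prob (c : ℝ) : IsProbabilityMeasure (gmeas c) := by
  constructor
  rw [gmeas_apply c MeasurableSet.univ]
  simp [setIntegral_univ, gpdf_integral one_pos c]

lemma gmeas_Iio (c t : ℝ) :
    gmeas c (Iio t) = ENNReal.ofReal (Real.exp (-Real.exp (-(t - c)))) := by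
  have h0 : gmeas c {t} = 0 :=
    (withDensity_absolutelyContinuous volume _) (Real.volume_singleton)
  have h1 : gmeas c (Iic t) = gmeas c (Iio t) + gmeas c {t} := by
    rw [← Set.Iio_union_right, measure_union (by simp) (measurableSet_singleton t)]
  rw [h0, add_zero] at h1
  rw [← h1, gmeas_Iic]

theorem gumbel_diff_tail_prob {Ω : Type*} [MeasurableSpace Ω] (μ : Measure Ω)
    [IsProbabilityMeasure μ] (X Y : Ω → ℝ) (a b δ : ℝ)
    (hX : Measurable X) (hY : Measurable Y)
    (hindep : IndepFun X Y μ)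
    (hXcdf : ∀ t : ℝ, μ {ω | X ω ≤ t} = ENNReal.ofReal (Real.exp (-Real.exp (-(t - a)))))
    (hYcdf : ∀ t : ℝ, μ {ω | Y ω ≤ t} = ENNReal.ofReal (Real.exp (-Real.exp (-(t - b))))) :
    μ {ω | X ω - Y ω > δ} = ENNReal.ofReal (sigma ((a - b) - δ)) := by
  set k := Real.exp (-((a - b) - δ)) with hk
  have hkpos : (0:ℝ) < k := Real.exp_pos _
  have hmapX : μ.map X = gmeas a := by
    haveI := Measure.isProbabilityMeasure_map (μ := μ) hX.aemeasurable
    refine Measure.ext_of_Iic _ _ (fun t => ?_)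
    rw [Measure.map_apply hX measurableSet_Iic, gmeas_Iic]
    exact hXcdf t
  have hmapY : μ.map Y = gmeas b := by
    haveI := Measure.isProbabilityMeasure_map (μ := μ) hY.aemeasurable
    refine Measure.ext_of_Iic _ _ (fun t => ?_)
    rw [Measure.map_apply hY measurableSet_Iic, gmeas_Iic]
    exact hYcdf t
  have hpair : Measurable fun ω => (X ω, Y ω) := hX.prodMk hY
  have hs : MeasurableSet {p : ℝ × ℝ | p.1 - p.2 > δ} :=
    measurableSet_lt measurable_const (measurable_fst.sub measurable_snd)
  have hset : {ω | X ω - Y ω > δ} = (fun ω => (X ω, Y ω)) ⁻¹' {p : ℝ × ℝ | p.1 - p.2 > δ} := rfl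
  rw [hset, ← Measure.map_apply hpair hs,
    (indepFun_iff_map_prod_eq_prod_map_map hX.aemeasurable hY.aemeasurable).1 hindep,
    hmapX, hmapY, Measure.prod_apply hs]
  have hpre : ∀ x : ℝ, (Prod.mk x ⁻¹' {p : ℝ × ℝ | p.1 - p.2 > δ}) = Iio (x - δ) := by
    intro x; ext y
    simp only [Set.mem_preimage, Set.mem_setOf_eq, Set.mem_Iio, gt_iff_lt]
    constructor <;> intro h <;> linarith
  simp_rw [hpre, gmeas_Iio]
  rw [gmeas, lintegral_withDensity_eq_lintegral_mul _
    ((gpdf_measurable 1 a).ennreal_ofReal) ((by fun_prop : Measurable fun x : ℝ => Real.exp (-Real.exp (-(x - δ - b)))).ennreal_ofReal)]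
  have hcomb : ∀ x : ℝ,
      ((fun x => ENNReal.ofReal (gpdf 1 a x)) *
        fun x => ENNReal.ofReal (Real.exp (-Real.exp (-(x - δ - b))))) x =
      ENNReal.ofReal ((1 + k)⁻¹ * gpdf (1 + k) a x) := by
    intro x
    have hx : Real.exp (-(x - δ - b)) = k * Real.exp (-(x - a)) := by
      rw [hk, ← Real.exp_add]; ring_nf
    simp only [Pi.mul_apply, ← ENNReal.ofReal_mul (gpdf_nonneg one_pos.le a x)]
    congr 1
    unfold gpdf
    rw [hx]
    set E := Real.exp (-(x - a)) with hE
    have hmerge : Real.exp (-(1 * E)) * Real.exp (-(k * E)) = Real.exp (-((1 + k) * E)) := by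
      rw [← Real.exp_add]; ring_nf
    have h1k : (1 + k) ≠ 0 := (by linarith : (0:ℝ) < 1 + k).ne'
    calc 1 * E * Real.exp (-(1 * E)) * Real.exp (-(k * E))
        = E * (Real.exp (-(1 * E)) * Real.exp (-(k * E))) := by ring
      _ = E * Real.exp (-((1 + k) * E)) := by rw [hmerge]
      _ = (1 + k)⁻¹ * ((1 + k) * E * Real.exp (-((1 + k) * E))) := by field_simp
  simp_rw [hcomb]
  have h1k : (0:ℝ) < 1 + k := by linarith
  rw [← ofReal_integral_eq_lintegral_ofReal
      ((gpdf_integrable h1k a).const_mul _)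
      (Filter.Eventually.of_forall fun x =>
        mul_nonneg (by positivity) (gpdf_nonneg h1k.le a x))]
  rw [MeasureTheory.integral_const_mul, gpdf_integral h1k a]
  congr 1
  unfold sigma
  rw [← hk, mul_one, one_div]
end

section
/- Let π* be the optimal policy π*(y) = π_ref(y) exp(r(y)/β)/Z. Then for any two responses y_w, y_l, the Bradley–Terry probability satisfies σ(r(y_w) − r(y_l)) = σ(β log(π*(y_w)/π_ref(y_w)) − β log(π*(y_l)/π_ref(y_l))); i.e., the intractable normalizer Z cancels in the reward difference. -/
open scoped BigOperators

theorem dpo_normalizer_cancels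
    {Y : Type*} [Countable Y]
    (πref : Y → ℝ) (r : Y → ℝ) (β : ℝ)
    (hβ : 0 < β)
    (href_pos : ∀ y, 0 < πref y)
    (href_sum : HasSum πref 1)
    (hr_bdd : ∃ C : ℝ, ∀ y, |r y| ≤ C)
    (Z : ℝ) (hZ : HasSum (fun y => πref y * Real.exp (r y / β)) Z)
    (πstar : Y → ℝ) (hπstar : ∀ y, πstar y = πref y * Real.exp (r y / β) / Z) :
    ∀ y_w y_l : Y,
      sigma (r y_w - r y_l) =
      sigma (β * Real.log (πstar y_w / πref y_w) - β * Real.log (πstar y_l / πref y_l)) := by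
  intro y_w y_l
  have hZpos : 0 < Z := by
    have h1 : 0 < πref y_w * Real.exp (r y_w / β) :=
      mul_pos (href_pos y_w) (Real.exp_pos _)
    have h2 : πref y_w * Real.exp (r y_w / β) ≤ Z :=
      le_hasSum hZ y_w (fun y _ => le_of_lt (mul_pos (href_pos y) (Real.exp_pos _)))
    linarith
  have key : ∀ y : Y, β * Real.log (πstar y / πref y) = r y - β * Real.log Z := by
    intro y
    have h : πstar y / πref y = Real.exp (r y / β) / Z := by
      rw [hπstar y, div_right_comm, mul_div_cancel_left₀ _ (ne_of_gt (href_pos y))]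
    rw [h, Real.log_div (Real.exp_ne_zero _) (ne_of_gt hZpos), Real.log_exp]
    field_simp
  rw [key y_w, key y_l]
  ring_nf
end
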